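/- arXiv:2201.03039 — 4 statements merged into one kernel-verified Lean document; each statement's English description precedes it below -/
import Mathlib

section
/- Let H be a complex Hilbert space and let φ, ψ ∈ H be unit vectors. Let E : H → H be a continuous linear operator which is positive and such that id − E is also positive (i.e. E is an effect operator, 0 ≤ E ≤ id). Then re⟨φ, E φ⟩ + re⟨ψ, (id − E) ψ⟩ ≤ 1 + √(1 − |⟨φ, ψ⟩|²). (Equivalently: in an equal-prior guessing game between the two pure states φ and ψ, any quantum measurement guesses correctly with probability at most (1 + √(1 − F²))/2, where F = |⟨φ, ψ⟩| is the fidelity of the two states.) -/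
section HelstromAux

variable {H : Type*} [NormedAddCommGroup H] [InnerProductSpace ℂ H] [CompleteSpace H]

lemma helstrom_pos_re (E : H →L[ℂ] H) (hE : E.IsPositive) (x : H) :
    0 ≤ (inner ℂ x (E x) : ℂ).re := by
  have h := hE.inner_nonneg_right x
  simpa using (Complex.nonneg_iff.mp h).1

lemma helstrom_sym_re (E : H →L[ℂ] H) (hE : E.IsPositive) (x y : H) :
    (inner ℂ x (E y) : ℂ).re = (inner ℂ y (E x) : ℂ).re := by
  have h := hE.1 x y
  simp only [ContinuousLinearMap.coe_coe] at h
  rw [← h]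
  have h2 := inner_re_symm (𝕜 := ℂ) (E x) y
  simpa using h2

lemma helstrom_cs (E : H →L[ℂ] H) (hE : E.IsPositive) (x y : H) :
    (inner ℂ x (E y) : ℂ).re ^ 2 ≤ (inner ℂ x (E x) : ℂ).re * (inner ℂ y (E y) : ℂ).re := by
  have key : ∀ t : ℝ, 0 ≤ (inner ℂ y (E y) : ℂ).re * (t * t)
      + (2 * (inner ℂ x (E y) : ℂ).re) * t + (inner ℂ x (E x) : ℂ).re := by
    intro t
    have h0 := helstrom_pos_re E hE (x + (t : ℂ) • y)
    have hsym := helstrom_sym_re E hE x y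
    simp only [map_add, map_smul, inner_add_left, inner_add_right, inner_smul_left,
      inner_smul_right, Complex.add_re, Complex.mul_re, Complex.conj_re, Complex.conj_im,
      Complex.conj_ofReal, Complex.ofReal_re, Complex.ofReal_im, zero_mul, mul_zero,
      neg_zero, sub_zero] at h0
    rw [← hsym] at h0
    ring_nf at h0 ⊢
    linarith [h0]
  have hd := discrim_le_zero key
  rw [discrim] at hd
  nlinarith [hd]

set_option maxHeartbeats 1000000 in
set_option maxHeartbeats 1000000 in
theorem helstrom_bound'' (φ ψ : H) (hφ : ‖φ‖ = 1) (hψ : ‖ψ‖ = 1)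
    (E : H →L[ℂ] H) (hE : E.IsPositive)
    (hE' : (ContinuousLinearMap.id ℂ H - E).IsPositive) :
    (inner ℂ φ (E φ) : ℂ).re + (inner ℂ ψ ((ContinuousLinearMap.id ℂ H - E) ψ) : ℂ).re
      ≤ 1 + Real.sqrt (1 - ‖(inner ℂ φ ψ : ℂ)‖ ^ 2) := by
  set D : H →L[ℂ] H := ContinuousLinearMap.id ℂ H - E with hD
  have hDre : ∀ x y : H, (inner ℂ x (D y) : ℂ).re = (inner ℂ x y : ℂ).re - (inner ℂ x (E y) : ℂ).re := by
    intro x y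
    simp [hD, ContinuousLinearMap.sub_apply, inner_sub_right, Complex.sub_re]
  set z : ℂ := inner ℂ φ ψ with hz
  set F : ℝ := ‖z‖ with hFdef
  have hF0 : 0 ≤ F := norm_nonneg z
  have hF1 : F ≤ 1 := by
    have h := norm_inner_le_norm (𝕜 := ℂ) φ ψ
    rw [hφ, hψ] at h
    simpa using h
  obtain ⟨c, hc1, hcz⟩ : ∃ c : ℂ, ‖c‖ = 1 ∧ c * z = (F : ℂ) := by
    rcases eq_or_ne z 0 with h | h
    · exact ⟨1, by simp, by simp [h, hFdef]⟩
    · have habs : ‖z‖ ≠ 0 := norm_ne_zero_iff.mpr h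
      refine ⟨(starRingEnd ℂ) z / (F : ℂ), ?_, ?_⟩
      · rw [norm_div, Complex.norm_conj, Complex.norm_real, Real.norm_of_nonneg hF0, ← hFdef]
        exact div_self habs
      · have hFne : (F : ℂ) ≠ 0 := by
          simpa [hFdef, Complex.ofReal_eq_zero] using habs
        field_simp
        rw [mul_comm, Complex.mul_conj, Complex.normSq_eq_norm_sq, ← hFdef]
        push_cast
        ring
  set ψ' : H := c • ψ with hψ'def
  have hcc : (starRingEnd ℂ) c * c = 1 := by
    rw [mul_comm, Complex.mul_conj, Complex.normSq_eq_norm_sq, hc1]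
    norm_num
  have hφψ' : (inner ℂ φ ψ' : ℂ) = (F : ℂ) := by
    rw [hψ'def, inner_smul_right]; exact hcz
  have hψ'φ : (inner ℂ ψ' φ : ℂ) = (F : ℂ) := by
    rw [← inner_conj_symm, hφψ', Complex.conj_ofReal]
  have hbE : (inner ℂ ψ' (E ψ') : ℂ) = inner ℂ ψ (E ψ) := by
    rw [hψ'def, map_smul, inner_smul_left, inner_smul_right, ← mul_assoc, hcc, one_mul]
  have hφφ : (inner ℂ φ φ : ℂ) = 1 := by
    rw [inner_self_eq_norm_sq_to_K, hφ]; norm_num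
  have hψψ : (inner ℂ ψ ψ : ℂ) = 1 := by
    rw [inner_self_eq_norm_sq_to_K, hψ]; norm_num
  have hψ'ψ' : (inner ℂ ψ' ψ' : ℂ) = 1 := by
    rw [hψ'def, inner_smul_left, inner_smul_right, ← mul_assoc, hcc, one_mul, hψψ]
  have hsymE := helstrom_sym_re E hE
  set u : H := φ - ψ' with hu
  set v : H := φ + ψ' with hv
  -- plain inner products of u, v
  have huu : (inner ℂ u u : ℂ).re = 2 - 2 * F := by
    simp only [hu, inner_sub_left, inner_sub_right, Complex.sub_re, hφφ, hψ'ψ', hφψ', hψ'φ,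
      Complex.one_re, Complex.ofReal_re]
    ring
  have hvv : (inner ℂ v v : ℂ).re = 2 + 2 * F := by
    simp only [hv, inner_add_left, inner_add_right, Complex.add_re, hφφ, hψ'ψ', hφψ', hψ'φ,
      Complex.one_re, Complex.ofReal_re]
    ring
  have huv : (inner ℂ u v : ℂ).re = 0 := by
    simp only [hu, hv, inner_sub_left, inner_add_right, Complex.sub_re, Complex.add_re,
      hφφ, hψ'ψ', hφψ', hψ'φ, Complex.one_re, Complex.ofReal_re]
    ring
  -- E-inner products
  have hEuu : (inner ℂ u (E u) : ℂ).re
      = (inner ℂ φ (E φ) : ℂ).re + (inner ℂ ψ' (E ψ') : ℂ).re - 2 * (inner ℂ φ (E ψ') : ℂ).re := by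
    simp only [hu, map_sub, inner_sub_left, inner_sub_right, Complex.sub_re]
    linarith [hsymE ψ' φ]
  have hEvv : (inner ℂ v (E v) : ℂ).re
      = (inner ℂ φ (E φ) : ℂ).re + (inner ℂ ψ' (E ψ') : ℂ).re + 2 * (inner ℂ φ (E ψ') : ℂ).re := by
    simp only [hv, map_add, inner_add_left, inner_add_right, Complex.add_re]
    linarith [hsymE ψ' φ]
  have hEuv : (inner ℂ u (E v) : ℂ).re
      = (inner ℂ φ (E φ) : ℂ).re - (inner ℂ ψ' (E ψ') : ℂ).re := by
    simp only [hu, hv, map_add, inner_sub_left, inner_add_right, Complex.sub_re, Complex.add_re]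
    linarith [hsymE ψ' φ]
  -- abbreviations for the four nonnegative quantities
  set p : ℝ := (inner ℂ u (E u) : ℂ).re with hp
  set q : ℝ := (inner ℂ v (E v) : ℂ).re with hq
  set p' : ℝ := (inner ℂ u (D u) : ℂ).re with hp'
  set q' : ℝ := (inner ℂ v (D v) : ℂ).re with hq'
  have hp0 : 0 ≤ p := helstrom_pos_re E hE u
  have hq0 : 0 ≤ q := helstrom_pos_re E hE v
  have hp'0 : 0 ≤ p' := helstrom_pos_re D hE' u
  have hq'0 : 0 ≤ q' := helstrom_pos_re D hE' v
  have hpp' : p + p' = 2 - 2 * F := by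
    rw [hp', hDre u u]; rw [huu] at *; linarith
  have hqq' : q + q' = 2 + 2 * F := by
    rw [hq', hDre v v]; rw [hvv] at *; linarith
  set A : ℝ := (inner ℂ φ (E φ) : ℂ).re
  set B : ℝ := (inner ℂ ψ (E ψ) : ℂ).re
  have hB' : (inner ℂ ψ' (E ψ') : ℂ).re = B := by rw [hbE]
  have hcs1 : (A - B) ^ 2 ≤ p * q := by
    have h := helstrom_cs E hE u v
    rw [hEuv, hB'] at h
    exact h
  have hcs2 : (A - B) ^ 2 ≤ p' * q' := by
    have h := helstrom_cs D hE' u v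
    rw [hDre u v, huv, hEuv, hB'] at h
    calc (A - B) ^ 2 = (0 - (A - B)) ^ 2 := by ring
    _ ≤ p' * q' := h
  -- the goal
  have hgoal2 : (inner ℂ ψ (D ψ) : ℂ).re = 1 - B := by
    rw [hDre ψ ψ, hψψ]; simp [B]
  rw [hgoal2]
  have h1F : 0 ≤ 1 - F ^ 2 := by nlinarith
  set lam : ℝ := Real.sqrt (1 - F ^ 2) with hlam
  have hlam0 : 0 ≤ lam := Real.sqrt_nonneg _
  have hlamsq : lam ^ 2 = 1 - F ^ 2 := Real.sq_sqrt h1F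
  clear_value p q p' q' A B lam
  -- it suffices that A - B ≤ lam
  have key : A - B ≤ lam := by
    set s1 : ℝ := Real.sqrt (p * q) with hs1
    set s2 : ℝ := Real.sqrt (p' * q') with hs2
    have hs10 : 0 ≤ s1 := Real.sqrt_nonneg _
    have hs20 : 0 ≤ s2 := Real.sqrt_nonneg _
    have hs1sq : s1 ^ 2 = p * q := Real.sq_sqrt (mul_nonneg hp0 hq0)
    have hs2sq : s2 ^ 2 = p' * q' := Real.sq_sqrt (mul_nonneg hp'0 hq'0)
    have h1 : A - B ≤ s1 := by
      calc A - B ≤ |A - B| := le_abs_self _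
      _ = Real.sqrt ((A - B) ^ 2) := (Real.sqrt_sq_eq_abs _).symm
      _ ≤ s1 := Real.sqrt_le_sqrt hcs1
    have h2 : A - B ≤ s2 := by
      calc A - B ≤ |A - B| := le_abs_self _
      _ = Real.sqrt ((A - B) ^ 2) := (Real.sqrt_sq_eq_abs _).symm
      _ ≤ s2 := Real.sqrt_le_sqrt hcs2
    have hmix : 2 * (s1 * s2) ≤ p * q' + p' * q := by
      have e1 : s1 = Real.sqrt p * Real.sqrt q := by rw [hs1, Real.sqrt_mul hp0]
      have e2 : s2 = Real.sqrt p' * Real.sqrt q' := by rw [hs2, Real.sqrt_mul hp'0]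
      have h2ab := two_mul_le_add_sq (Real.sqrt p * Real.sqrt q') (Real.sqrt p' * Real.sqrt q)
      have ea : (Real.sqrt p * Real.sqrt q') ^ 2 = p * q' := by
        rw [mul_pow, Real.sq_sqrt hp0, Real.sq_sqrt hq'0]
      have eb : (Real.sqrt p' * Real.sqrt q) ^ 2 = p' * q := by
        rw [mul_pow, Real.sq_sqrt hp'0, Real.sq_sqrt hq0]
      rw [ea, eb] at h2ab
      calc 2 * (s1 * s2)
          = 2 * (Real.sqrt p * Real.sqrt q') * (Real.sqrt p' * Real.sqrt q) := by
            rw [e1, e2]; ring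
        _ ≤ p * q' + p' * q := h2ab
    have hsum : (s1 + s2) ^ 2 ≤ (2 * lam) ^ 2 := by
      have e3 : p * q + p' * q' + (p * q' + p' * q) = (p + p') * (q + q') := by ring
      have e4 : (2 - 2 * F) * (2 + 2 * F) = (2 * lam) ^ 2 := by
        linear_combination (-4 : ℝ) * hlamsq
      have e5 : (s1 + s2) ^ 2 = p * q + p' * q' + 2 * (s1 * s2) := by
        rw [add_sq, hs1sq, hs2sq]; ring
      rw [e5, ← e4, ← hpp', ← hqq', ← e3]
      linarith
    have hfin : s1 + s2 ≤ 2 * lam := by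
      have h6 := Real.sqrt_le_sqrt hsum
      rwa [Real.sqrt_sq (by positivity), Real.sqrt_sq (by positivity)] at h6
    linarith
  linarith

end HelstromAux

/-- **Helstrom state-discrimination bound.**
For unit vectors `φ ψ` in a complex Hilbert space and an effect operator `E`
(i.e. `0 ≤ E ≤ id`), one has
`re⟨φ, E φ⟩ + re⟨ψ, (id − E) ψ⟩ ≤ 1 + √(1 − |⟨φ, ψ⟩|²)`. -/
theorem helstrom_bound {H : Type*} [NormedAddCommGroup H] [InnerProductSpace ℂ H]
    [CompleteSpace H] (φ ψ : H) (hφ : ‖φ‖ = 1) (hψ : ‖ψ‖ = 1)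
    (E : H →L[ℂ] H) (hE : E.IsPositive)
    (hE' : (ContinuousLinearMap.id ℂ H - E).IsPositive) :
    (inner ℂ φ (E φ) : ℂ).re + (inner ℂ ψ ((ContinuousLinearMap.id ℂ H - E) ψ) : ℂ).re
      ≤ 1 + Real.sqrt (1 - ‖(inner ℂ φ ψ : ℂ)‖ ^ 2) := by
  exact helstrom_bound'' φ ψ hφ hψ E hE hE'
end

section
/- Let μ > 0 and θ ∈ ℝ, and set α = √μ·e^{iθ}. Then for all m, n ∈ ℕ: (c_α(m)·c_α(n) + c_{−α}(m)·c_{−α}(n))/2 = e^{i(m+n)θ}·√(P_{m+n|2μ})·√((m+n)!/(2^{m+n}·m!·n!)) if m+n is even, and equals 0 if m+n is odd. (In other words, the two-mode cat state (|α⟩_a|α⟩_b + |−α⟩_a|−α⟩_b)/2 equals Σ_{j even} e^{ijθ}√(P_{j|2μ}) |j⟩_{ab}, where |j⟩_{ab} = Σ_{i=0}^{j} √(j!/(2^j i!(j−i)!)) |i⟩_a|j−i⟩_b.) -/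
/-- Coherent-state coefficient: `c_α(n) = e^{−|α|²/2} α^n / √(n!)`. -/
noncomputable def coherentCoeff (α : ℂ) (n : ℕ) : ℂ :=
  Complex.exp (-(‖α‖ : ℂ) ^ 2 / 2) * α ^ n / (Real.sqrt (Nat.factorial n) : ℂ)

/-- Poisson probability with mean `lam`: `P_{j|lam} = e^{−lam} lam^j / j!`. -/
noncomputable def poisson (lam : ℝ) (j : ℕ) : ℝ :=
  Real.exp (-lam) * lam ^ j / (Nat.factorial j : ℝ)

lemma sqrt_key (μ : ℝ) (hμ : 0 ≤ μ) (m n : ℕ) :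
    Real.sqrt (poisson (2 * μ) (m + n))
      * Real.sqrt ((Nat.factorial (m + n) : ℝ)
          / (2 ^ (m + n) * Nat.factorial m * Nat.factorial n))
    = Real.exp (-μ) * (Real.sqrt μ) ^ (m + n)
        / (Real.sqrt (Nat.factorial m) * Real.sqrt (Nat.factorial n)) := by
  set j := m + n
  have hA : (0:ℝ) ≤ poisson (2 * μ) j := by
    unfold poisson
    positivity
  rw [← Real.sqrt_mul hA]
  have hfm : (0:ℝ) < Nat.factorial m := by positivity
  have hfn : (0:ℝ) < Nat.factorial n := by positivity
  have hfj : (0:ℝ) < Nat.factorial j := by positivity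
  have h1 : Real.exp (-μ) ^ 2 = Real.exp (-(2*μ)) := by
    rw [← Real.exp_nat_mul]; ring_nf
  have h2 : (Real.sqrt μ) ^ 2 = μ := Real.sq_sqrt hμ
  have h3 : (Real.sqrt (Nat.factorial m)) ^ 2 = (Nat.factorial m : ℝ) :=
    Real.sq_sqrt hfm.le
  have h4 : (Real.sqrt (Nat.factorial n)) ^ 2 = (Nat.factorial n : ℝ) :=
    Real.sq_sqrt hfn.le
  have h5 : ((Real.sqrt μ) ^ j) ^ 2 = μ ^ j := by
    rw [← pow_mul, mul_comm j 2, pow_mul, h2]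
  have h2j : ((2:ℝ) * μ) ^ j = 2 ^ j * μ ^ j := mul_pow 2 μ j
  have expand : (Real.exp (-μ) * (Real.sqrt μ) ^ j
      / (Real.sqrt (Nat.factorial m) * Real.sqrt (Nat.factorial n))) ^ 2
      = Real.exp (-(2*μ)) * μ ^ j / (Nat.factorial m * Nat.factorial n) := by
    rw [div_pow, mul_pow, mul_pow, h1, h3, h4, h5]
  have heq : poisson (2 * μ) j * ((Nat.factorial j : ℝ)
      / (2 ^ j * Nat.factorial m * Nat.factorial n))
      = (Real.exp (-μ) * (Real.sqrt μ) ^ j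
        / (Real.sqrt (Nat.factorial m) * Real.sqrt (Nat.factorial n))) ^ 2 := by
    rw [expand]
    unfold poisson
    rw [h2j]
    field_simp
  rw [heq, Real.sqrt_sq (by positivity)]

/-- The in-phase two-mode cat state `(|α⟩|α⟩ + |−α⟩|−α⟩)/2` has photon-number
coefficients `e^{i(m+n)θ} √(P_{m+n|2μ}) √((m+n)!/(2^{m+n} m! n!))` when `m+n` is even,
and `0` when `m+n` is odd. -/
theorem cat_state_even_decomposition (μ θ : ℝ) (hμ : 0 < μ) (α : ℂ)
    (hα : α = (Real.sqrt μ : ℂ) * Complex.exp (θ * Complex.I)) (m n : ℕ) :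
    (coherentCoeff α m * coherentCoeff α n
        + coherentCoeff (-α) m * coherentCoeff (-α) n) / 2 =
      if Even (m + n) then
        Complex.exp ((m + n : ℕ) * θ * Complex.I)
          * (Real.sqrt (poisson (2 * μ) (m + n)) : ℂ)
          * (Real.sqrt ((Nat.factorial (m + n) : ℝ)
              / (2 ^ (m + n) * Nat.factorial m * Nat.factorial n)) : ℂ)
      else 0 := by
  have habsα : (‖α‖ : ℝ) = Real.sqrt μ := by
    rw [hα, norm_mul, Complex.norm_exp]
    simp [Complex.norm_of_nonneg (Real.sqrt_nonneg μ)]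
  have key : ∀ β : ℂ, ‖β‖ = Real.sqrt μ →
      coherentCoeff β m * coherentCoeff β n
        = Complex.exp (-(μ:ℂ)) * β ^ (m + n)
          / ((Real.sqrt (Nat.factorial m) : ℂ) * (Real.sqrt (Nat.factorial n) : ℂ)) := by
    intro β hβ
    unfold coherentCoeff
    have hsqβ : ((‖β‖ : ℂ)) ^ 2 = (μ : ℂ) := by
      rw [hβ]; norm_cast; exact Real.sq_sqrt hμ.le
    rw [hsqβ, pow_add,
      show Complex.exp (-(μ:ℂ)) = Complex.exp (-(μ:ℂ)/2) * Complex.exp (-(μ:ℂ)/2) by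
        rw [← Complex.exp_add]; ring_nf]
    ring
  have hnegabs : ‖-α‖ = Real.sqrt μ := by rw [norm_neg, habsα]
  rw [key α habsα, key (-α) hnegabs]
  by_cases hpar : Even (m + n)
  · rw [if_pos hpar, hpar.neg_pow]
    have hrs := sqrt_key μ hμ.le m n
    have hαpow : α ^ (m + n) = ((Real.sqrt μ : ℝ) : ℂ) ^ (m + n)
        * Complex.exp ((m + n : ℕ) * θ * Complex.I) := by
      rw [hα, mul_pow, ← Complex.exp_nat_mul]
      ring_nf
    have hexpμ : Complex.exp (-(μ:ℂ)) = ((Real.exp (-μ) : ℝ) : ℂ) := by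
      rw [Complex.ofReal_exp]; norm_cast
    have hcast : ((Real.sqrt (poisson (2 * μ) (m + n)) : ℝ) : ℂ)
        * ((Real.sqrt ((Nat.factorial (m + n) : ℝ)
            / (2 ^ (m + n) * Nat.factorial m * Nat.factorial n)) : ℝ) : ℂ)
        = ((Real.exp (-μ) : ℝ) : ℂ) * ((Real.sqrt μ : ℝ) : ℂ) ^ (m + n)
          / (((Real.sqrt (Nat.factorial m) : ℝ) : ℂ)
            * ((Real.sqrt (Nat.factorial n) : ℝ) : ℂ)) := by
      rw [← Complex.ofReal_mul, hrs]
      push_cast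
      ring
    conv_rhs => rw [mul_assoc, hcast]
    rw [hαpow, hexpμ]
    ring
  · rw [if_neg hpar, (Nat.odd_iff.mpr (Nat.not_even_iff.mp hpar)).neg_pow]
    ring
end

section
/- Let μ > 0 and θ ∈ ℝ, and set α = √μ·e^{iθ}. Then for all m, n ∈ ℕ: (c_α(m)·c_{−α}(n) + c_{−α}(m)·c_α(n))/2 = (−1)^m·e^{i(m+n)θ}·√(P_{m+n|2μ})·√((m+n)!/(2^{m+n}·m!·n!)) if m+n is even, and equals 0 if m+n is odd. (In other words, the anti-phase two-mode cat state (|α⟩_a|−α⟩_b + |−α⟩_a|α⟩_b)/2 equals Σ_{j even} e^{ijθ}√(P_{j|2μ}) |j⟩'_{ab}, where |j⟩'_{ab} = Σ_{i=0}^{j} (−1)^i √(j!/(2^j i!(j−i)!)) |i⟩_a|j−i⟩_b.) -/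
lemma key_real (μ : ℝ) (hμ : 0 < μ) (m n : ℕ) :
    Real.sqrt (poisson (2 * μ) (m + n))
      * Real.sqrt ((Nat.factorial (m + n) : ℝ)
          / (2 ^ (m + n) * Nat.factorial m * Nat.factorial n))
      = Real.exp (-μ) * (Real.sqrt μ) ^ (m + n)
          / (Real.sqrt (Nat.factorial m) * Real.sqrt (Nat.factorial n)) := by
  have hpos : ∀ k : ℕ, (0:ℝ) < Nat.factorial k := fun k => by positivity
  have hB : (0:ℝ) ≤ Real.exp (-μ) * (Real.sqrt μ) ^ (m + n)
      / (Real.sqrt (Nat.factorial m) * Real.sqrt (Nat.factorial n)) := by positivity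
  have hm : Real.sqrt (Nat.factorial m) ^ 2 = (Nat.factorial m : ℝ) :=
    Real.sq_sqrt (hpos m).le
  have hn : Real.sqrt (Nat.factorial n) ^ 2 = (Nat.factorial n : ℝ) :=
    Real.sq_sqrt (hpos n).le
  have hμ2 : Real.sqrt μ ^ 2 = μ := Real.sq_sqrt hμ.le
  have he : Real.exp (-(2*μ)) = Real.exp (-μ) ^ 2 := by
    rw [← Real.exp_nat_mul]; ring_nf
  have h2 : ((Real.sqrt μ) ^ (m+n)) ^ 2 = μ ^ (m+n) := by
    rw [← pow_mul, mul_comm (m+n) 2, pow_mul, hμ2]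
  have hfact : (Nat.factorial (m+n) : ℝ) ≠ 0 := (hpos _).ne'
  have hsm : Real.sqrt (Nat.factorial m) ≠ 0 := by positivity
  have hsn : Real.sqrt (Nat.factorial n) ≠ 0 := by positivity
  have hA : poisson (2 * μ) (m + n)
      * ((Nat.factorial (m + n) : ℝ) / (2 ^ (m + n) * Nat.factorial m * Nat.factorial n))
      = (Real.exp (-μ) * (Real.sqrt μ) ^ (m + n)
          / (Real.sqrt (Nat.factorial m) * Real.sqrt (Nat.factorial n))) ^ 2 := by
    unfold poisson
    rw [he, mul_pow 2 μ, div_pow, mul_pow (Real.exp (-μ)), h2,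
      mul_pow (Real.sqrt (Nat.factorial m)), hm, hn]
    field_simp
  rw [← Real.sqrt_mul (by unfold poisson; positivity), hA, Real.sqrt_sq hB]

/-- The anti-phase two-mode cat state `(|α⟩|−α⟩ + |−α⟩|α⟩)/2` has photon-number
coefficients `(−1)^m e^{i(m+n)θ} √(P_{m+n|2μ}) √((m+n)!/(2^{m+n} m! n!))` when
`m+n` is even, and `0` when `m+n` is odd. -/
theorem antiphase_cat_state_even_decomposition (μ θ : ℝ) (hμ : 0 < μ) (α : ℂ)
    (hα : α = (Real.sqrt μ : ℂ) * Complex.exp (θ * Complex.I)) (m n : ℕ) :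
    (coherentCoeff α m * coherentCoeff (-α) n
        + coherentCoeff (-α) m * coherentCoeff α n) / 2 =
      if Even (m + n) then
        (-1 : ℂ) ^ m * Complex.exp ((m + n : ℕ) * θ * Complex.I)
          * (Real.sqrt (poisson (2 * μ) (m + n)) : ℂ)
          * (Real.sqrt ((Nat.factorial (m + n) : ℝ)
              / (2 ^ (m + n) * Nat.factorial m * Nat.factorial n)) : ℂ)
      else 0 := by
  have habs : (‖α‖ : ℝ) = Real.sqrt μ := by
    rw [hα, norm_mul, Complex.norm_exp]
    simp [Complex.norm_of_nonneg (Real.sqrt_nonneg μ)]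
  have habs2 : ((‖α‖ : ℂ)) ^ 2 = (μ : ℂ) := by
    rw [habs]; norm_cast; exact Real.sq_sqrt hμ.le
  have hsm : (Real.sqrt (Nat.factorial m) : ℂ) ≠ 0 := by norm_cast; positivity
  have hsn : (Real.sqrt (Nat.factorial n) : ℂ) ≠ 0 := by norm_cast; positivity
  have hLHS : (coherentCoeff α m * coherentCoeff (-α) n
        + coherentCoeff (-α) m * coherentCoeff α n) / 2
      = Complex.exp (-(μ:ℂ)) * (((-1:ℂ)^m + (-1:ℂ)^n) / 2) * α ^ (m + n)
          / ((Real.sqrt (Nat.factorial m) : ℂ) * (Real.sqrt (Nat.factorial n) : ℂ)) := by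
    unfold coherentCoeff
    rw [norm_neg, habs2, neg_pow α n, neg_pow α m, pow_add α,
      show Complex.exp (-(μ:ℂ)) = Complex.exp (-(μ:ℂ)/2) * Complex.exp (-(μ:ℂ)/2) from by
        rw [← Complex.exp_add]; norm_num]
    field_simp
    ring
  have hh2 : (-1:ℂ)^m * (-1:ℂ)^m = 1 := by
    rw [← pow_add]; exact Even.neg_one_pow (Even.add_self m)
  by_cases hpar : Even (m + n)
  · simp only [hpar, if_true]
    have hsum : (-1:ℂ)^m + (-1:ℂ)^n = 2 * (-1:ℂ)^m := by
      have h1 : (-1:ℂ)^m * (-1:ℂ)^n = 1 := by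
        rw [← pow_add]; exact Even.neg_one_pow hpar
      linear_combination ((-1:ℂ)^m) * h1 - ((-1:ℂ)^n) * hh2
    have hαpow : α ^ (m + n) = ((Real.sqrt μ : ℂ)) ^ (m+n)
        * Complex.exp ((m + n : ℕ) * θ * Complex.I) := by
      rw [hα, mul_pow, ← Complex.exp_nat_mul]
      ring_nf
    have hexp : Complex.exp (-(μ:ℂ)) = ((Real.exp (-μ) : ℝ) : ℂ) := by
      rw [Complex.ofReal_exp, Complex.ofReal_neg]
    have hkeyC : ((Real.sqrt (poisson (2*μ) (m+n)) : ℝ) : ℂ)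
        * ((Real.sqrt ((Nat.factorial (m + n) : ℝ)
              / (2 ^ (m + n) * Nat.factorial m * Nat.factorial n)) : ℝ) : ℂ)
        = ((Real.exp (-μ) : ℝ) : ℂ) * ((Real.sqrt μ : ℝ) : ℂ) ^ (m+n)
          / (((Real.sqrt (Nat.factorial m) : ℝ) : ℂ) * ((Real.sqrt (Nat.factorial n) : ℝ) : ℂ)) := by
      exact_mod_cast congrArg Complex.ofReal (key_real μ hμ m n)
    rw [hLHS, hsum, hαpow, hexp]
    linear_combination (-((-1:ℂ)^m * Complex.exp ((m + n : ℕ) * θ * Complex.I))) * hkeyC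
  · simp only [hpar, if_false]
    have h1 : (-1:ℂ)^m * (-1:ℂ)^n = -1 := by
      rw [← pow_add]
      exact Odd.neg_one_pow (Nat.odd_iff.mpr (by rw [Nat.even_iff] at hpar; omega))
    have hsum : (-1:ℂ)^m + (-1:ℂ)^n = 0 := by
      linear_combination ((-1:ℂ)^m) * h1 - ((-1:ℂ)^n) * hh2
    rw [hLHS, hsum]
    simp
end

section
/- Let μ > 0 and let M ≥ 1 be an integer. For l ∈ {0, 1, …, M−1} set α_l = √μ·e^{2πil/M}. Then for all m, n, m', n' ∈ ℕ: (1/M)·Σ_{l=0}^{M−1} c_{α_l}(m)·c_{α_l}(n)·conj(c_{α_l}(m')·c_{α_l}(n')) = Σ_{j=0}^{M−1} \tildeP_{j|2μ}·g_{j,2μ}(m,n)·g_{j,2μ}(m',n'). (That is, a pair of identical coherent states of intensity μ each, whose common phase is uniformly randomized over the M-th roots of unity, has density operator equal to the mixture Σ_{j=0}^{M−1} \tildeP_{j|2μ} |ĵ_{2μ}⟩⟨ĵ_{2μ}| of the states with coefficients g_{j,2μ}.) -/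
/-- `tildeP M lam j = Σ_{n=0}^∞ P_{j+Mn|lam}`. -/
noncomputable def tildeP (M : ℕ) (lam : ℝ) (j : ℕ) : ℝ :=
  ∑' n : ℕ, poisson lam (j + M * n)

/-- Two-mode coefficients of the state `|ĵ_lam⟩`:
`g_{j,lam}(m,n) = √(P_{m+n|lam}/tildeP_{j|lam}) √((m+n)!/(2^{m+n} m! n!))` if
`m+n ≡ j (mod M)`, and `0` otherwise. -/
noncomputable def g (M : ℕ) (lam : ℝ) (j : ℕ) (p : ℕ × ℕ) : ℝ :=
  if (p.1 + p.2) % M = j % M then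
    Real.sqrt (poisson lam (p.1 + p.2) / tildeP M lam j)
      * Real.sqrt ((Nat.factorial (p.1 + p.2) : ℝ)
          / (2 ^ (p.1 + p.2) * Nat.factorial p.1 * Nat.factorial p.2))
  else 0

lemma aux_rootsum (M : ℕ) (hM : 1 ≤ M) (d : ℤ) :
    ∑ l ∈ Finset.range M, Complex.exp (2 * Real.pi * Complex.I * d * l / M) =
      if (M : ℤ) ∣ d then (M : ℂ) else 0 := by
  have hM0 : (M : ℂ) ≠ 0 := Nat.cast_ne_zero.2 (by omega)
  have hpi : (2:ℂ) * Real.pi * Complex.I ≠ 0 := by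
    simp [Real.pi_ne_zero, Complex.I_ne_zero, Complex.ofReal_ne_zero]
  set ω : ℂ := Complex.exp (2 * Real.pi * Complex.I * d / M) with hω
  have hpow : ∀ l : ℕ, Complex.exp (2 * Real.pi * Complex.I * d * l / M) = ω ^ l := by
    intro l
    rw [hω, ← Complex.exp_nat_mul]
    ring_nf
  simp_rw [hpow]
  by_cases hdvd : (M : ℤ) ∣ d
  · obtain ⟨e, he⟩ := id hdvd
    have hω1 : ω = 1 := by
      rw [hω, he]
      push_cast
      have : 2 * (Real.pi:ℂ) * Complex.I * ((M:ℂ) * (e:ℂ)) / (M:ℂ)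
          = (e:ℂ) * (2 * Real.pi * Complex.I) := by
        field_simp
      rw [this, Complex.exp_int_mul_two_pi_mul_I]
    simp [hω1, hdvd]
  · have hω1 : ω ≠ 1 := by
      intro h
      rw [hω, Complex.exp_eq_one_iff] at h
      obtain ⟨k, hk⟩ := h
      apply hdvd
      refine ⟨k, ?_⟩
      have hc : (d : ℂ) = (M : ℂ) * k := by
        have := hk
        field_simp at this
        apply mul_left_cancel₀ hpi
        linear_combination (2 * Real.pi * Complex.I) * this
      exact_mod_cast hc
    rw [geom_sum_eq hω1]
    have hωM : ω ^ M = 1 := by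
      rw [hω, ← Complex.exp_nat_mul]
      have : (M:ℂ) * (2 * Real.pi * Complex.I * d / M) = d * (2 * Real.pi * Complex.I) := by
        field_simp
      rw [this, Complex.exp_int_mul_two_pi_mul_I]
    simp [hωM, hdvd]

lemma aux_poisson_nonneg {lam : ℝ} (h : 0 ≤ lam) (j : ℕ) : 0 ≤ poisson lam j := by
  unfold poisson; positivity

lemma aux_summable_poisson_shift (lam : ℝ) (M j : ℕ) (hM : 1 ≤ M) :
    Summable fun n : ℕ => poisson lam (j + M * n) := by
  have h1 : Summable fun k : ℕ => poisson lam k := by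
    have h := (Real.summable_pow_div_factorial lam).mul_left (Real.exp (-lam))
    refine h.congr fun k => ?_
    unfold poisson; ring
  exact h1.comp_injective fun a b hab => by
    have h2 := Nat.add_left_cancel (hab : j + M * a = j + M * b)
    exact Nat.eq_of_mul_eq_mul_left (by omega) h2

lemma aux_tildeP_pos {lam : ℝ} (hlam : 0 < lam) (M j : ℕ) (hM : 1 ≤ M) :
    0 < tildeP M lam j := by
  have hs := aux_summable_poisson_shift lam M j hM
  have h0 : 0 < poisson lam j := by unfold poisson; positivity
  have hle := Summable.le_tsum hs 0 fun i _ => aux_poisson_nonneg hlam.le _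
  simp only [Nat.mul_zero, Nat.add_zero] at hle
  exact lt_of_lt_of_le h0 hle

lemma aux_sqrt_key (μ : ℝ) (hμ : 0 < μ) (a b : ℕ) :
    Real.sqrt (poisson (2 * μ) (a + b))
      * Real.sqrt ((Nat.factorial (a + b) : ℝ)
          / (2 ^ (a + b) * Nat.factorial a * Nat.factorial b)) =
    Real.exp (-μ) * Real.sqrt μ ^ (a + b)
      / (Real.sqrt (Nat.factorial a) * Real.sqrt (Nat.factorial b)) := by
  rw [← Real.sqrt_mul (aux_poisson_nonneg (by positivity) _)]
  have h : poisson (2 * μ) (a + b)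
      * ((Nat.factorial (a + b) : ℝ) / (2 ^ (a + b) * Nat.factorial a * Nat.factorial b))
      = (Real.exp (-μ) * Real.sqrt μ ^ (a + b)
          / (Real.sqrt (Nat.factorial a) * Real.sqrt (Nat.factorial b))) ^ 2 := by
    have hfa : (0:ℝ) < Nat.factorial a := by positivity
    have hfb : (0:ℝ) < Nat.factorial b := by positivity
    have hfk : (0:ℝ) < Nat.factorial (a + b) := by positivity
    have e1 : Real.sqrt (Nat.factorial a) ^ 2 = Nat.factorial a := Real.sq_sqrt hfa.le
    have e2 : Real.sqrt (Nat.factorial b) ^ 2 = Nat.factorial b := Real.sq_sqrt hfb.le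
    have e3 : Real.sqrt μ ^ 2 = μ := Real.sq_sqrt hμ.le
    have e4 : Real.exp (-μ) ^ 2 = Real.exp (-(2*μ)) := by
      rw [← Real.exp_nat_mul]; ring_nf
    have e5 : (Real.sqrt μ ^ (a+b)) ^ 2 = μ ^ (a+b) := by
      rw [← pow_mul, mul_comm (a+b) 2, pow_mul, e3]
    unfold poisson
    simp only [div_pow, mul_pow]
    rw [e1, e2, e4, e5]
    field_simp
  rw [h, Real.sqrt_sq (by positivity)]

/-- A pair of identical coherent states of intensity `μ` each, with common phase
uniformly randomized over the `M`-th roots of unity, has density operator equal to the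
mixture `Σ_{j=0}^{M−1} tildeP_{j|2μ} |ĵ_{2μ}⟩⟨ĵ_{2μ}|`, entrywise in the
photon-number basis. -/
theorem discrete_phase_randomized_pair_decomposition (μ : ℝ) (hμ : 0 < μ)
    (M : ℕ) (hM : 1 ≤ M) (α : ℕ → ℂ)
    (hα : ∀ l, α l = (Real.sqrt μ : ℂ)
      * Complex.exp (2 * Real.pi * l / M * Complex.I)) (m n m' n' : ℕ) :
    (1 / (M : ℂ)) * ∑ l ∈ Finset.range M,
        coherentCoeff (α l) m * coherentCoeff (α l) n
          * (starRingEnd ℂ) (coherentCoeff (α l) m' * coherentCoeff (α l) n') =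
      ((∑ j ∈ Finset.range M,
          tildeP M (2 * μ) j * g M (2 * μ) j (m, n) * g M (2 * μ) j (m', n') : ℝ) : ℂ) := by
  have hM0 : (M:ℂ) ≠ 0 := Nat.cast_ne_zero.2 (by omega)
  set d : ℤ := (m:ℤ) + n - m' - n' with hd
  set R : ℝ := Real.exp (-(2*μ)) * Real.sqrt μ ^ (m+n+m'+n')
      / (Real.sqrt m.factorial * Real.sqrt n.factorial
          * Real.sqrt m'.factorial * Real.sqrt n'.factorial) with hR
  -- per-term computation of the left-hand side
  have hterm : ∀ l : ℕ, coherentCoeff (α l) m * coherentCoeff (α l) n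
          * (starRingEnd ℂ) (coherentCoeff (α l) m' * coherentCoeff (α l) n') =
      (R : ℂ) * Complex.exp (2 * Real.pi * Complex.I * (d : ℂ) * l / M) := by
    set θ : ℕ → ℝ := fun l => 2 * Real.pi * l / M with hθ
    have hα' : ∀ l, α l = (Real.sqrt μ : ℂ) * Complex.exp ((θ l : ℝ) * Complex.I) := by
      intro l; rw [hα l]; congr 2; simp [hθ]
    have habs : ∀ l, ‖α l‖ = Real.sqrt μ := by
      intro l
      rw [hα' l, norm_mul, Complex.norm_real, Complex.norm_exp_ofReal_mul_I, mul_one, Real.norm_eq_abs,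
        abs_of_nonneg (Real.sqrt_nonneg μ)]
    have h1 : ((Real.sqrt μ : ℝ) : ℂ) ^ 2 = (μ : ℂ) := by
      rw [← Complex.ofReal_pow, Real.sq_sqrt hμ.le]
    have hcc : ∀ l k, coherentCoeff (α l) k =
        Complex.exp (-(μ:ℂ)/2) * ((Real.sqrt μ : ℝ):ℂ) ^ k / (Real.sqrt (Nat.factorial k) : ℂ)
          * Complex.exp ((θ l : ℝ) * Complex.I) ^ k := by
      intro l k
      unfold coherentCoeff
      rw [habs l, hα' l, h1, mul_pow]
      ring
    have hccconj : ∀ l k, (starRingEnd ℂ) (coherentCoeff (α l) k) =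
        Complex.exp (-(μ:ℂ)/2) * ((Real.sqrt μ : ℝ):ℂ) ^ k / (Real.sqrt (Nat.factorial k) : ℂ)
          * Complex.exp ((θ l : ℝ) * -Complex.I) ^ k := by
      intro l k
      rw [hcc l k]
      simp only [map_mul, map_div₀, map_pow, Complex.conj_ofReal, ← Complex.exp_conj,
        map_neg, Complex.conj_I, map_ofNat]
    have hEE : ∀ l : ℕ,
        Complex.exp ((θ l : ℝ) * Complex.I) ^ m * Complex.exp ((θ l : ℝ) * Complex.I) ^ n
          * (Complex.exp ((θ l : ℝ) * -Complex.I) ^ m'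
              * Complex.exp ((θ l : ℝ) * -Complex.I) ^ n') =
        Complex.exp (2 * Real.pi * Complex.I * (d : ℂ) * l / M) := by
      intro l
      rw [← Complex.exp_nat_mul, ← Complex.exp_nat_mul, ← Complex.exp_nat_mul,
        ← Complex.exp_nat_mul, ← Complex.exp_add, ← Complex.exp_add, ← Complex.exp_add]
      congr 1
      simp only [hθ, hd]
      push_cast
      field_simp
      ring
    intro l
    rw [hcc l m, hcc l n, map_mul, hccconj l m', hccconj l n']
    have hpre : Complex.exp (-(μ:ℂ)/2) ^ 4 = ((Real.exp (-(2*μ)) : ℝ) : ℂ) := by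
      rw [← Complex.exp_nat_mul, Complex.ofReal_exp]
      push_cast
      congr 1
      ring
    calc (Complex.exp (-(μ:ℂ)/2) * ((Real.sqrt μ : ℝ):ℂ) ^ m / (Real.sqrt m.factorial : ℂ)
            * Complex.exp ((θ l : ℝ) * Complex.I) ^ m)
          * (Complex.exp (-(μ:ℂ)/2) * ((Real.sqrt μ : ℝ):ℂ) ^ n / (Real.sqrt n.factorial : ℂ)
            * Complex.exp ((θ l : ℝ) * Complex.I) ^ n)
          * (Complex.exp (-(μ:ℂ)/2) * ((Real.sqrt μ : ℝ):ℂ) ^ m'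
                / (Real.sqrt m'.factorial : ℂ)
              * Complex.exp ((θ l : ℝ) * -Complex.I) ^ m'
            * (Complex.exp (-(μ:ℂ)/2) * ((Real.sqrt μ : ℝ):ℂ) ^ n'
                / (Real.sqrt n'.factorial : ℂ)
              * Complex.exp ((θ l : ℝ) * -Complex.I) ^ n'))
        = (Complex.exp (-(μ:ℂ)/2) ^ 4 * ((Real.sqrt μ : ℝ):ℂ) ^ (m+n+m'+n')
            / ((Real.sqrt m.factorial : ℂ) * (Real.sqrt n.factorial : ℂ)
                * (Real.sqrt m'.factorial : ℂ) * (Real.sqrt n'.factorial : ℂ)))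
          * (Complex.exp ((θ l : ℝ) * Complex.I) ^ m * Complex.exp ((θ l : ℝ) * Complex.I) ^ n
              * (Complex.exp ((θ l : ℝ) * -Complex.I) ^ m'
                  * Complex.exp ((θ l : ℝ) * -Complex.I) ^ n')) := by
          rw [pow_add, pow_add, pow_add]; ring
      _ = (R : ℂ) * Complex.exp (2 * Real.pi * Complex.I * (d : ℂ) * l / M) := by
          rw [hEE l, hpre, hR]
          push_cast
          ring
  rw [Finset.sum_congr rfl fun l _ => hterm l, ← Finset.mul_sum, aux_rootsum M hM d]
  by_cases hdvd : (M:ℤ) ∣ d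
  · -- congruent case
    have hcong : (m + n) % M = (m' + n') % M := by
      have hd' : ((m + n : ℕ) : ℤ) - ((m' + n' : ℕ) : ℤ) = d := by push_cast; ring
      exact ((Nat.modEq_iff_dvd (n := M) (a := m' + n') (b := m + n)).2
        (hd' ▸ hdvd)).symm
    rw [if_pos hdvd]
    have hLHS : 1 / (M:ℂ) * ((R:ℂ) * (M:ℂ)) = (R:ℂ) := by
      field_simp
    rw [hLHS]
    -- right-hand side: single nonzero term at j0
    set j0 : ℕ := (m + n) % M with hj0
    have hj0lt : j0 < M := Nat.mod_lt _ (by omega)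
    have hj0mod : j0 % M = j0 := Nat.mod_eq_of_lt hj0lt
    rw [Finset.sum_eq_single_of_mem j0 (Finset.mem_range.2 hj0lt)
      (fun j hj hne => by
        have hjlt : j < M := Finset.mem_range.1 hj
        have hcond : (m + n) % M ≠ j % M := by
          rw [Nat.mod_eq_of_lt hjlt, ← hj0]
          exact fun h => hne h.symm
        simp only [g]
        rw [if_neg hcond]
        ring)]
    simp only [g, hj0mod]
    rw [if_pos hcong.symm]
    rw [if_pos hj0.symm]
    set T : ℝ := tildeP M (2*μ) j0 with hT
    have hTpos : 0 < T := aux_tildeP_pos (by linarith) M j0 hM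
    have hsT : Real.sqrt T * Real.sqrt T = T := Real.mul_self_sqrt hTpos.le
    rw [Real.sqrt_div (aux_poisson_nonneg (by linarith) _) T,
      Real.sqrt_div (aux_poisson_nonneg (by linarith) _) T]
    have hre : T * (Real.sqrt (poisson (2*μ) (m+n)) / Real.sqrt T
          * Real.sqrt ((Nat.factorial (m+n) : ℝ)
              / (2 ^ (m+n) * Nat.factorial m * Nat.factorial n)))
        * (Real.sqrt (poisson (2*μ) (m'+n')) / Real.sqrt T
          * Real.sqrt ((Nat.factorial (m'+n') : ℝ)
              / (2 ^ (m'+n') * Nat.factorial m' * Nat.factorial n'))) =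
        (Real.sqrt (poisson (2*μ) (m+n))
          * Real.sqrt ((Nat.factorial (m+n) : ℝ)
              / (2 ^ (m+n) * Nat.factorial m * Nat.factorial n)))
        * (Real.sqrt (poisson (2*μ) (m'+n'))
          * Real.sqrt ((Nat.factorial (m'+n') : ℝ)
              / (2 ^ (m'+n') * Nat.factorial m' * Nat.factorial n')))
        * (T / (Real.sqrt T * Real.sqrt T)) := by
      ring
    norm_num only
    rw [hre, hsT, div_self hTpos.ne', mul_one, aux_sqrt_key μ hμ m n,
      aux_sqrt_key μ hμ m' n']
    have hexp : Real.exp (-(2*μ)) = Real.exp (-μ) * Real.exp (-μ) := by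
      rw [← Real.exp_add]; ring_nf
    rw [hR, hexp]
    push_cast
    ring
  · -- incongruent case: both sides vanish
    have hncong : (m + n) % M ≠ (m' + n') % M := by
      intro h
      apply hdvd
      have hd' : ((m + n : ℕ) : ℤ) - ((m' + n' : ℕ) : ℤ) = d := by push_cast; ring
      exact hd' ▸ (Nat.modEq_iff_dvd (n := M) (a := m' + n') (b := m + n)).1 h.symm
    rw [if_neg hdvd, mul_zero, mul_zero]
    rw [Finset.sum_eq_zero fun j hj => by
      by_cases h1 : (m + n) % M = j % M
      · have h2 : (m' + n') % M ≠ j % M := fun h2 => hncong (h1.trans h2.symm)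
        simp only [g]
        rw [if_neg h2]
        ring
      · simp only [g]
        rw [if_neg h1]
        ring]
    norm_num
end
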